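/- Let Y be a compact metric space equipped with a continuous flow φ : ℝ × Y → Y, and equip (−1,1) × Y with the product metric. Suppose Ξ ⊆ (−1,1) × Y is a nonempty closed subset that is a δ-almost cylinder with respect to φ for every δ > 0. Then Ξ = Ioo (−1) 1 ×ˢ Λ, where Λ ⊆ Y is a nonempty compact subset invariant under the flow, i.e. φ(τ, y) ∈ Λ for every y ∈ Λ and every τ ∈ ℝ. -/
import Mathlib


/-!
Statement 11: A nonempty closed subset of `(−1,1) × Y` that is a `δ`-almost cylinder
for every `δ > 0` is a cylinder `(−1,1) × Λ` over a nonempty compact flow-invariant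
set `Λ ⊆ Y`.

The space `(−1,1) × Y` is formalized as `↥(Set.Ioo (-1 : ℝ) 1) × Y` with the product
(max) metric; there the cylinder `Ioo (−1) 1 ×ˢ Λ` is `Set.univ ×ˢ Λ`.
-/

/-- A continuous flow on `Y`. -/
def IsFlow {Y : Type*} [TopologicalSpace Y] (φ : ℝ → Y → Y) : Prop :=
  Continuous (fun p : ℝ × Y => φ p.1 p.2) ∧ (∀ y, φ 0 y = y) ∧
    ∀ s t : ℝ, ∀ y, φ (s + t) y = φ s (φ t y)

/-- `Ξ ⊆ (−1,1) × Y` is a `δ`-almost cylinder with respect to the flow `φ`: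
it is nonempty, closed, and for every `(t,y) ∈ Ξ` and every `τ ∈ (−1,1)`, both
`(τ, y)` and `(t, φ(τ, y))` are within distance `δ` of `Ξ`. -/
def IsAlmostCylinder {Y : Type*} [MetricSpace Y] (φ : ℝ → Y → Y) (δ : ℝ)
    (Ξ : Set (↥(Set.Ioo (-1 : ℝ) 1) × Y)) : Prop :=
  Ξ.Nonempty ∧ IsClosed Ξ ∧
    ∀ p ∈ Ξ, ∀ τ : ↥(Set.Ioo (-1 : ℝ) 1),
      Metric.infDist (τ, p.2) Ξ ≤ δ ∧ Metric.infDist (p.1, φ (τ : ℝ) p.2) Ξ ≤ δ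

theorem almost_cylinder_for_all_delta_is_invariant_cylinder
    (Y : Type*) [MetricSpace Y] [CompactSpace Y]
    (φ : ℝ → Y → Y) (hφ : IsFlow φ)
    (Ξ : Set (↥(Set.Ioo (-1 : ℝ) 1) × Y))
    (h : ∀ δ > (0 : ℝ), IsAlmostCylinder φ δ Ξ) :
    ∃ Λ : Set Y, Λ.Nonempty ∧ IsCompact Λ ∧
      (∀ y ∈ Λ, ∀ τ : ℝ, φ τ y ∈ Λ) ∧
      Ξ = (Set.univ ×ˢ Λ : Set (↥(Set.Ioo (-1 : ℝ) 1) × Y)) := by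
  obtain ⟨hne, hcl, -⟩ := h 1 one_pos
  have hmem : ∀ p ∈ Ξ, ∀ τ : ↥(Set.Ioo (-1:ℝ) 1),
      ((τ, p.2) : ↥(Set.Ioo (-1:ℝ) 1) × Y) ∈ Ξ ∧ (p.1, φ (τ:ℝ) p.2) ∈ Ξ := by
    intro p hp τ
    have h1 : ∀ q : ↥(Set.Ioo (-1:ℝ) 1) × Y,
        (∀ δ > (0:ℝ), Metric.infDist q Ξ ≤ δ) → q ∈ Ξ := by
      intro q hq
      have h0 : Metric.infDist q Ξ ≤ 0 := by
        refine le_of_forall_pos_le_add ?_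
        intro ε hε; simpa using hq ε hε
      have hn := Metric.infDist_nonneg (x := q) (s := Ξ)
      exact (IsClosed.mem_iff_infDist_zero hcl hne).2 (le_antisymm h0 hn)
    exact ⟨h1 _ fun δ hδ => ((h δ hδ).2.2 p hp τ).1,
           h1 _ fun δ hδ => ((h δ hδ).2.2 p hp τ).2⟩
  set Λ : Set Y := Prod.snd '' Ξ with hΛdef
  set z : ↥(Set.Ioo (-1:ℝ) 1) := ⟨0, by norm_num⟩ with hz
  have hΛiff : ∀ y, y ∈ Λ ↔ ∀ t : ↥(Set.Ioo (-1:ℝ) 1),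
      ((t, y) : ↥(Set.Ioo (-1:ℝ) 1) × Y) ∈ Ξ := by
    intro y
    constructor
    · rintro ⟨p, hp, rfl⟩ t; exact (hmem p hp t).1
    · intro hy; exact ⟨(z, y), hy z, rfl⟩
  obtain ⟨hc, h0, hadd⟩ := hφ
  have hsmall : ∀ y ∈ Λ, ∀ σ : ℝ, |σ| < 1 → φ σ y ∈ Λ := by
    intro y hy σ hσ
    obtain ⟨hσ1, hσ2⟩ := abs_lt.1 hσ
    have hzy : ((z, y) : ↥(Set.Ioo (-1:ℝ) 1) × Y) ∈ Ξ := (hΛiff y).1 hy z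
    exact ⟨(z, φ σ y), (hmem (z, y) hzy ⟨σ, hσ1, hσ2⟩).2, rfl⟩
  have hinv : ∀ y ∈ Λ, ∀ τ : ℝ, φ τ y ∈ Λ := by
    have key : ∀ n : ℕ, ∀ τ : ℝ, |τ| ≤ n / 2 → ∀ y ∈ Λ, φ τ y ∈ Λ := by
      intro n
      induction n with
      | zero =>
        intro τ hτ y hy
        have hτ0 : τ = 0 := by
          have h1 := abs_nonneg τ
          have h2 : |τ| = 0 := by push_cast at hτ; linarith
          exact abs_eq_zero.1 h2
        rw [hτ0, h0]; exact hy
      | succ n ih =>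
        intro τ hτ y hy
        set N : ℝ := (n : ℝ) with hN
        have hN0 : (0:ℝ) ≤ N := Nat.cast_nonneg n
        have hN1 : (0:ℝ) < N + 1 := by linarith
        have hτ' : |τ| ≤ (N + 1) / 2 := by push_cast at hτ; linarith
        set σ : ℝ := τ * (N / (N + 1)) with hσdef
        have h1 : |σ| ≤ N / 2 := by
          rw [hσdef, abs_mul, abs_of_nonneg (by positivity : (0:ℝ) ≤ N / (N+1))]
          rw [show |τ| * (N / (N+1)) = |τ| * N / (N+1) by ring,
            div_le_div_iff₀ hN1 two_pos]
          nlinarith [abs_nonneg τ]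
        have h2 : |τ - σ| < 1 := by
          have he : τ - σ = τ / (N + 1) := by
            rw [hσdef]; field_simp; ring
          rw [he, abs_div, abs_of_pos hN1, div_lt_one hN1]
          linarith
        have hsplit : τ = (τ - σ) + σ := by ring
        rw [hsplit, hadd]
        exact hsmall _ (ih σ h1 y hy) _ h2
    intro y hy τ
    refine key ⌈2 * |τ|⌉₊ τ ?_ y hy
    have h2 : (2 * |τ| : ℝ) ≤ (⌈2 * |τ|⌉₊ : ℝ) := Nat.le_ceil _
    linarith
  have hΛeq : Λ = (fun y : Y => ((z, y) : ↥(Set.Ioo (-1:ℝ) 1) × Y)) ⁻¹' Ξ := by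
    ext y
    simp only [Set.mem_preimage]
    exact ⟨fun hy => (hΛiff y).1 hy z, fun hy => ⟨(z, y), hy, rfl⟩⟩
  have hΛclosed : IsClosed Λ := by
    rw [hΛeq]
    exact hcl.preimage (Continuous.prodMk continuous_const continuous_id)
  refine ⟨Λ, ?_, hΛclosed.isCompact, hinv, ?_⟩
  · obtain ⟨p, hp⟩ := hne; exact ⟨p.2, p, hp, rfl⟩
  · ext ⟨t, y⟩
    simp only [Set.mem_prod, Set.mem_univ, true_and]
    exact ⟨fun hp => ⟨(t, y), hp, rfl⟩, fun hy => (hΛiff y).1 hy t⟩
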